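/- Let Y ⊆ ℝ be a set such that (a) no point of Y is an accumulation point of Y, and (b) every accumulation point p of Y satisfies: p is an accumulation point of Y ∩ (−∞, p) and an accumulation point of Y ∩ (p, +∞). Then every y ∈ Y that is not the greatest element of Y has an immediate successor in Y, i.e., there exists z ∈ Y with z > y and no element of Y strictly between y and z. -/
import Mathlib


open Filter

/-- Let `Y ⊆ ℝ` be a set none of whose points is an accumulation point of `Y`,
and such that every accumulation point of `Y` is both a left and a right
accumulation point.  Then every element of `Y` which is not greatest in `Y`
has an immediate successor in `Y`. -/
theorem exists_immediate_successor_of_two_sided_acc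
    (Y : Set ℝ)
    (ha : ∀ y ∈ Y, ¬ AccPt y (𝓟 Y))
    (hb : ∀ p : ℝ, AccPt p (𝓟 Y) →
      AccPt p (𝓟 (Y ∩ Set.Iio p)) ∧ AccPt p (𝓟 (Y ∩ Set.Ioi p))) :
    ∀ y ∈ Y, (∃ x ∈ Y, y < x) →
      ∃ z ∈ Y, y < z ∧ ∀ w ∈ Y, ¬ (y < w ∧ w < z) := by
  intro y hy hex
  set S : Set ℝ := Y ∩ Set.Ioi y with hSdef
  have hS : S.Nonempty := by
    obtain ⟨x, hx, hyx⟩ := hex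
    exact ⟨x, hx, hyx⟩
  have bdd : BddBelow S := ⟨y, fun s hs => le_of_lt hs.2⟩
  set z := sInf S with hz
  have hzle : ∀ s ∈ S, z ≤ s := fun s hs => csInf_le bdd hs
  have hyz : y ≤ z := le_csInf hS (fun s hs => le_of_lt hs.2)
  by_cases hzS : z ∈ S
  · exact ⟨z, hzS.1, hzS.2, fun w hw ⟨h1, h2⟩ =>
      absurd (hzle w ⟨hw, h1⟩) (not_le.mpr h2)⟩
  · -- z is an accumulation point of Y
    have hacc : AccPt z (𝓟 Y) := by
      rw [accPt_iff_nhds]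
      intro U hU
      obtain ⟨ε, hε, hball⟩ := Metric.mem_nhds_iff.mp hU
      obtain ⟨s, hsS, hslt⟩ := exists_lt_of_csInf_lt hS (by linarith : sInf S < z + ε)
      have hzs : z ≤ s := hzle s hsS
      refine ⟨s, ⟨hball ?_, hsS.1⟩, ?_⟩
      · rw [Metric.mem_ball, Real.dist_eq, abs_of_nonneg (by linarith)]
        linarith
      · intro h; exact hzS (h ▸ hsS)
    have hyz' : y < z := by
      rcases lt_or_eq_of_le hyz with h | h
      · exact h
      · exact absurd (h ▸ hacc) (ha y hy)
    -- left accumulation gives a point of Y in (y, z), contradicting inf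
    obtain ⟨hl, _⟩ := hb z hacc
    rw [accPt_iff_nhds] at hl
    obtain ⟨w, ⟨hwIoi, hwY, hwlt⟩, _⟩ := hl (Set.Ioi y) (Ioi_mem_nhds hyz')
    exact absurd (hzle w ⟨hwY, hwIoi⟩) (not_le.mpr hwlt)
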